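/- Let A, B, C be real numbers with H := B^2 + A*C > 0. Then for all c₁, c₂ ∈ ℝ, (c₂^2*A - c₁^2*C - 2*c₁*c₂*B)/H ≤ 2*(c₁^2 + c₂^2)/μ, where μ = C - A + sqrt((A+C)^2 + 4B^2) > 0. -/

import Mathlib

theorem stmt_4 (A B C H μ : ℝ) (hH : H = B ^ 2 + A * C) (hHpos : 0 < H)
    (hμ : μ = C - A + Real.sqrt ((A + C) ^ 2 + 4 * B ^ 2)) :
    0 < μ ∧ ∀ c₁ c₂ : ℝ,
      (c₂ ^ 2 * A - c₁ ^ 2 * C - 2 * c₁ * c₂ * B) / H ≤ 2 * (c₁ ^ 2 + c₂ ^ 2) / μ := by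
  set s := Real.sqrt ((A + C) ^ 2 + 4 * B ^ 2) with hs
  have hs0 : 0 ≤ s := Real.sqrt_nonneg _
  have hs2 : s ^ 2 = (A + C) ^ 2 + 4 * B ^ 2 := by
    rw [hs, Real.sq_sqrt]; positivity
  have hμpos : 0 < μ := by nlinarith [sq_nonneg (s - (A - C)), sq_nonneg (s + (A - C))]
  refine ⟨hμpos, fun c₁ c₂ => ?_⟩
  rw [div_le_div_iff₀ hHpos hμpos]
  have hK : 0 ≤ c₁ ^ 2 + c₂ ^ 2 := by positivity
  have hs2K : s ^ 2 * (c₁ ^ 2 + c₂ ^ 2) ^ 2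
      = ((A + C) ^ 2 + 4 * B ^ 2) * (c₁ ^ 2 + c₂ ^ 2) ^ 2 := by rw [hs2]
  have h1 : ((A + C) * (c₂ ^ 2 - c₁ ^ 2) - 4 * B * c₁ * c₂) ^ 2
      ≤ (s * (c₁ ^ 2 + c₂ ^ 2)) ^ 2 := by
    nlinarith [sq_nonneg ((A + C) * (2 * c₁ * c₂) + 2 * B * (c₂ ^ 2 - c₁ ^ 2)), hs2K]
  have key : (A + C) * (c₂ ^ 2 - c₁ ^ 2) - 4 * B * c₁ * c₂ ≤ s * (c₁ ^ 2 + c₂ ^ 2) := by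
    nlinarith [h1, mul_nonneg hs0 hK]
  have hid : (s + A - C) * μ = 4 * H := by rw [hμ]; nlinarith [hs2]
  nlinarith [mul_le_mul_of_nonneg_right key hμpos.le, hid, mul_nonneg hK hμpos.le]
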